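/- Let $r \ge 1$ and $s < r - 1$ be real numbers. For any nonnegative measurable function $f$ on $(0,\infty)$, one has the Hardy inequality $\int_0^\infty \left(\frac{1}{x}\int_0^x f(\tau)\,d\tau\right)^r x^s\, dx \le \left(\frac{r}{r-s-1}\right)^r \int_0^\infty f(x)^r x^s\, dx$. -/

import Mathlib

open MeasureTheory Set

lemma lint_Ioo {a x : ℝ} (ha : -1 < a) (hx : 0 < x) :
    ∫⁻ t in Set.Ioo (0:ℝ) x, ENNReal.ofReal (t ^ a) = ENNReal.ofReal (x ^ (a+1) / (a+1)) := by
  have hint : IntegrableOn (fun t : ℝ => t ^ a) (Set.Ioo 0 x) := by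
    have h := intervalIntegral.intervalIntegrable_rpow' (a := 0) (b := x) ha
    rw [intervalIntegrable_iff_integrableOn_Ioo_of_le hx.le] at h
    exact h
  rw [← MeasureTheory.ofReal_integral_eq_lintegral_ofReal hint ?_]
  · congr 1
    rw [← MeasureTheory.integral_Ioc_eq_integral_Ioo, ← intervalIntegral.integral_of_le hx.le,
      integral_rpow (Or.inl ha)]
    rw [Real.zero_rpow (by linarith)]
    ring
  · filter_upwards [ae_restrict_mem measurableSet_Ioo] with t ht
    exact Real.rpow_nonneg ht.1.le a

lemma lint_Ioi {a t : ℝ} (ha : a < -1) (ht : 0 < t) :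
    ∫⁻ x in Set.Ioi t, ENNReal.ofReal (x ^ a) = ENNReal.ofReal (t ^ (a+1) / (-(a+1))) := by
  rw [← MeasureTheory.ofReal_integral_eq_lintegral_ofReal (integrableOn_Ioi_rpow_of_lt ha ht) ?_]
  · rw [integral_Ioi_rpow_of_lt ha ht]
    rw [div_neg, neg_div]
  · filter_upwards [ae_restrict_mem measurableSet_Ioi] with x hx
    exact Real.rpow_nonneg (ht.trans hx).le a

lemma swap_lemma (g h : ℝ → ENNReal) (hg : Measurable g) (hh : Measurable h) :
    ∫⁻ x in Set.Ioi (0:ℝ), (∫⁻ t in Set.Ioo (0:ℝ) x, g t) * h x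
      = ∫⁻ t in Set.Ioi (0:ℝ), g t * ∫⁻ x in Set.Ioi t, h x := by
  have hS : MeasurableSet {p : ℝ × ℝ | p.2 < p.1} := measurableSet_lt measurable_snd measurable_fst
  set F : ℝ × ℝ → ENNReal := ({p : ℝ × ℝ | p.2 < p.1}).indicator (fun p => g p.2 * h p.1) with hF
  have hFm : Measurable F := ((hg.comp measurable_snd).mul (hh.comp measurable_fst)).indicator hS
  have e1 : ∫⁻ x in Set.Ioi (0:ℝ), (∫⁻ t in Set.Ioo (0:ℝ) x, g t) * h x
      = ∫⁻ x in Set.Ioi (0:ℝ), ∫⁻ t in Set.Ioi (0:ℝ), F (x, t) := by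
    refine setLIntegral_congr_fun_ae measurableSet_Ioi (ae_of_all _ fun x hx => ?_)
    have : ∀ t : ℝ, F (x, t) = (Set.Iio x).indicator (fun t => g t * h x) t := by
      intro t
      simp [hF, Set.indicator_apply]
    simp_rw [this]
    rw [lintegral_indicator measurableSet_Iio, Measure.restrict_restrict measurableSet_Iio,
      Set.Iio_inter_Ioi]
    rw [lintegral_mul_const _ hg]
  have e2 : ∫⁻ x in Set.Ioi (0:ℝ), ∫⁻ t in Set.Ioi (0:ℝ), F (x, t)
      = ∫⁻ t in Set.Ioi (0:ℝ), ∫⁻ x in Set.Ioi (0:ℝ), F (x, t) := by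
    exact lintegral_lintegral_swap (hFm.aemeasurable)
  rw [e1, e2]
  refine setLIntegral_congr_fun_ae measurableSet_Ioi (ae_of_all _ fun t ht => ?_)
  have : ∀ x : ℝ, F (x, t) = (Set.Ioi t).indicator (fun x => g t * h x) x := by
    intro x
    simp [hF, Set.indicator_apply]
  simp_rw [this]
  rw [lintegral_indicator measurableSet_Ioi, Measure.restrict_restrict measurableSet_Ioi,
    Set.Ioi_inter_Ioi, max_eq_left (le_of_lt ht)]
  rw [lintegral_const_mul _ hh]

private lemma hardy_eq_one (s : ℝ) (hs : s < 0) (f : ℝ → ENNReal) (hf : Measurable f) :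
    ∫⁻ x in Set.Ioi (0:ℝ),
        ((∫⁻ τ in Set.Ioo (0:ℝ) x, f τ) / ENNReal.ofReal x) ^ (1:ℝ) * ENNReal.ofReal (x ^ s)
      ≤ ENNReal.ofReal ((1 / (1 - s - 1)) ^ (1:ℝ)) *
          ∫⁻ x in Set.Ioi (0:ℝ), (f x) ^ (1:ℝ) * ENNReal.ofReal (x ^ s) := by
  have hmeas : Measurable fun x : ℝ => ENNReal.ofReal (x ^ (s-1)) :=
    ENNReal.measurable_ofReal.comp (by measurability)
  have e1 : ∫⁻ x in Set.Ioi (0:ℝ),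
        ((∫⁻ τ in Set.Ioo (0:ℝ) x, f τ) / ENNReal.ofReal x) ^ (1:ℝ) * ENNReal.ofReal (x ^ s)
      = ∫⁻ x in Set.Ioi (0:ℝ), (∫⁻ τ in Set.Ioo (0:ℝ) x, f τ) * ENNReal.ofReal (x ^ (s-1)) := by
    refine setLIntegral_congr_fun_ae measurableSet_Ioi (ae_of_all _ fun x hx => ?_)
    rw [ENNReal.rpow_one, div_eq_mul_inv, mul_assoc]
    congr 1
    rw [← ENNReal.ofReal_inv_of_pos hx, ← ENNReal.ofReal_mul (inv_nonneg.2 hx.le)]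
    congr 1
    rw [Real.rpow_sub hx, Real.rpow_one]
    field_simp
  rw [e1, swap_lemma f _ hf hmeas]
  have e2 : ∫⁻ t in Set.Ioi (0:ℝ), f t * ∫⁻ x in Set.Ioi t, ENNReal.ofReal (x ^ (s-1))
      = ∫⁻ t in Set.Ioi (0:ℝ), ENNReal.ofReal (1 / (-s)) * (f t * ENNReal.ofReal (t ^ s)) := by
    refine setLIntegral_congr_fun_ae measurableSet_Ioi (ae_of_all _ fun t ht => ?_)
    rw [lint_Ioi (by linarith) ht]
    have : s - 1 + 1 = s := by ring
    rw [this, div_eq_mul_inv, ENNReal.ofReal_mul (Real.rpow_nonneg ht.le s), one_div,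
      ENNReal.ofReal_inv_of_pos (by linarith), ← ENNReal.ofReal_inv_of_pos (by linarith)]
    ring
  rw [e2, lintegral_const_mul' _ _ ENNReal.ofReal_ne_top]
  apply le_of_eq
  congr 1
  · simp [Real.rpow_one, show (1:ℝ) - s - 1 = -s by ring]
  · refine setLIntegral_congr_fun_ae measurableSet_Ioi (ae_of_all _ fun t ht => ?_)
    rw [ENNReal.rpow_one]

lemma measurable_rpow_const' (c : ℝ) : Measurable fun x : ℝ => x ^ c := by measurability

lemma ofReal_rpow_mul {x : ℝ} (hx : 0 < x) (a b : ℝ) :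
    ENNReal.ofReal (x ^ a) * ENNReal.ofReal (x ^ b) = ENNReal.ofReal (x ^ (a + b)) := by
  rw [← ENNReal.ofReal_mul (Real.rpow_nonneg hx.le a), ← Real.rpow_add hx]

lemma ofReal_rpow_div {x : ℝ} (hx : 0 < x) (a b : ℝ) :
    ENNReal.ofReal (x ^ a) / ENNReal.ofReal (x ^ b) = ENNReal.ofReal (x ^ (a - b)) := by
  rw [Real.rpow_sub hx, ENNReal.ofReal_div_of_pos (Real.rpow_pos_of_pos hx b)]

private lemma hardy_gt (r s : ℝ) (hr1 : 1 < r) (hs : s < r - 1)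
    (f : ℝ → ENNReal) (hf : Measurable f) :
    ∫⁻ x in Set.Ioi (0:ℝ),
        ((∫⁻ τ in Set.Ioo (0:ℝ) x, f τ) / ENNReal.ofReal x) ^ r * ENNReal.ofReal (x ^ s)
      ≤ ENNReal.ofReal ((r / (r - s - 1)) ^ r) *
          ∫⁻ x in Set.Ioi (0:ℝ), (f x) ^ r * ENNReal.ofReal (x ^ s) := by
  have hr0 : (0:ℝ) < r := by linarith
  have hrne : r ≠ 0 := hr0.ne'
  set q : ℝ := Real.conjExponent r with hq
  have hconj : r.HolderConjugate q := Real.HolderConjugate.conjExponent hr1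
  have hqv : q = r / (r - 1) := rfl
  have hq0 : (0:ℝ) < q := hconj.symm.pos
  set A : ℝ := (1 + s) / r with hA
  set β : ℝ := (r - 1) * (1 + s) / r ^ 2 with hβ
  set u : ℝ := (r - 1) * (1 + s) / r with hu
  set γ : ℝ := s - 1 - u with hγdef
  have hrm1 : r - 1 ≠ 0 := by linarith
  have hβq : β * q = A := by rw [hβ, hqv, hA]; field_simp
  have hβr : β * r = u := by rw [hβ, hu]; field_simp
  have hA1 : A < 1 := by rw [hA, div_lt_one hr0]; linarith
  have h1A : (0:ℝ) < 1 - A := by linarith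
  have hus : s < u := by rw [hu, lt_div_iff₀ hr0]; nlinarith
  have hγ : γ < -1 := by rw [hγdef]; linarith
  have hrq : 1 / q * r = r - 1 := by rw [hqv]; field_simp
  set C1 : ℝ := (1 - A) ^ (-(r - 1)) with hC1
  set G : ℝ → ENNReal := fun t => f t ^ r * ENNReal.ofReal (t ^ u) with hG
  have hGm : Measurable G := by
    apply Measurable.mul
    · exact hf.pow_const r
    · exact ENNReal.measurable_ofReal.comp (measurable_rpow_const' _)
  -- Hölder step
  have holder : ∀ x : ℝ, 0 < x → (∫⁻ t in Set.Ioo (0:ℝ) x, f t)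
      ≤ (∫⁻ t in Set.Ioo (0:ℝ) x, G t) ^ (1/r)
        * ENNReal.ofReal ((x ^ (1 - A) / (1 - A)) ^ (1/q)) := by
    intro x hx
    have h1 : ∫⁻ t in Set.Ioo (0:ℝ) x, f t
        = ∫⁻ t in Set.Ioo (0:ℝ) x,
            ((fun t => f t * ENNReal.ofReal (t ^ β)) * (fun t => ENNReal.ofReal (t ^ (-β)))) t := by
      refine setLIntegral_congr_fun_ae measurableSet_Ioo (ae_of_all _ fun t ht => ?_)
      simp only [Pi.mul_apply]
      rw [mul_assoc, ← ENNReal.ofReal_mul (Real.rpow_nonneg ht.1.le _), ← Real.rpow_add ht.1]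
      simp
    rw [h1]
    have hm1 : AEMeasurable (fun t : ℝ => f t * ENNReal.ofReal (t ^ β))
        (volume.restrict (Set.Ioo (0:ℝ) x)) :=
      (hf.mul (ENNReal.measurable_ofReal.comp (measurable_rpow_const' _))).aemeasurable
    have hm2 : AEMeasurable (fun t : ℝ => ENNReal.ofReal (t ^ (-β)))
        (volume.restrict (Set.Ioo (0:ℝ) x)) :=
      (ENNReal.measurable_ofReal.comp (measurable_rpow_const' _)).aemeasurable
    refine le_trans (ENNReal.lintegral_mul_le_Lp_mul_Lq _ hconj hm1 hm2) ?_
    apply le_of_eq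
    congr 1
    · congr 1
      refine setLIntegral_congr_fun_ae measurableSet_Ioo (ae_of_all _ fun t ht => ?_)
      rw [ENNReal.mul_rpow_of_nonneg _ _ hr0.le, ENNReal.ofReal_rpow_of_pos
        (Real.rpow_pos_of_pos ht.1 β), ← Real.rpow_mul ht.1.le, hβr]
    · have e : ∫⁻ t in Set.Ioo (0:ℝ) x, (fun t : ℝ => ENNReal.ofReal (t ^ (-β))) t ^ q
          = ∫⁻ t in Set.Ioo (0:ℝ) x, ENNReal.ofReal (t ^ (-A)) := by
        refine setLIntegral_congr_fun_ae measurableSet_Ioo (ae_of_all _ fun t ht => ?_)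
        rw [ENNReal.ofReal_rpow_of_pos (Real.rpow_pos_of_pos ht.1 _), ← Real.rpow_mul ht.1.le,
          neg_mul, hβq]
      rw [e, lint_Ioo (by linarith : (-1:ℝ) < -A) hx, show -A + 1 = 1 - A by ring,
        ENNReal.ofReal_rpow_of_pos (by positivity)]
  -- pointwise bound
  have hexp : (1 - A) * (r - 1) - r + s = γ := by rw [hA, hγdef, hu]; field_simp; ring
  have key : ∀ x ∈ Set.Ioi (0:ℝ),
      ((∫⁻ τ in Set.Ioo (0:ℝ) x, f τ) / ENNReal.ofReal x) ^ r * ENNReal.ofReal (x ^ s)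
        ≤ ENNReal.ofReal C1 * ((∫⁻ t in Set.Ioo (0:ℝ) x, G t) * ENNReal.ofReal (x ^ γ)) := by
    intro x hx
    rw [Set.mem_Ioi] at hx
    set B := ∫⁻ t in Set.Ioo (0:ℝ) x, G t with hB
    have hD : ((B ^ (1/r)) * ENNReal.ofReal ((x ^ (1 - A) / (1 - A)) ^ (1/q))) ^ r
        = B * (ENNReal.ofReal (x ^ ((1 - A) * (r - 1))) * ENNReal.ofReal C1) := by
      rw [ENNReal.mul_rpow_of_nonneg _ _ hr0.le, ← ENNReal.rpow_mul,
        one_div_mul_cancel hrne, ENNReal.rpow_one,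
        ENNReal.ofReal_rpow_of_pos (by positivity), ← Real.rpow_mul (by positivity), hrq,
        Real.div_rpow (Real.rpow_nonneg hx.le _) h1A.le, ← Real.rpow_mul hx.le,
        div_eq_mul_inv, ← Real.rpow_neg h1A.le, ← hC1,
        ENNReal.ofReal_mul (Real.rpow_nonneg hx.le _)]
    have e0 : ((∫⁻ τ in Set.Ioo (0:ℝ) x, f τ) / ENNReal.ofReal x) ^ r * ENNReal.ofReal (x ^ s)
        = (∫⁻ τ in Set.Ioo (0:ℝ) x, f τ) ^ r * ENNReal.ofReal (x ^ (s - r)) := by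
      rw [ENNReal.div_rpow_of_nonneg _ _ hr0.le, ENNReal.ofReal_rpow_of_pos hx,
        div_eq_mul_inv, mul_assoc, mul_comm (ENNReal.ofReal (x ^ r))⁻¹,
        ← div_eq_mul_inv, ofReal_rpow_div hx s r]
    rw [e0]
    calc (∫⁻ τ in Set.Ioo (0:ℝ) x, f τ) ^ r * ENNReal.ofReal (x ^ (s - r))
        ≤ ((B ^ (1/r)) * ENNReal.ofReal ((x ^ (1 - A) / (1 - A)) ^ (1/q))) ^ r
            * ENNReal.ofReal (x ^ (s - r)) :=
          mul_le_mul_left (ENNReal.rpow_le_rpow (holder x hx) hr0.le) _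
      _ = B * (ENNReal.ofReal (x ^ ((1 - A) * (r - 1))) * ENNReal.ofReal C1)
            * ENNReal.ofReal (x ^ (s - r)) := by rw [hD]
      _ = ENNReal.ofReal C1 * (B *
            (ENNReal.ofReal (x ^ ((1 - A) * (r - 1))) * ENNReal.ofReal (x ^ (s - r)))) := by ring
      _ = ENNReal.ofReal C1 * (B * ENNReal.ofReal (x ^ γ)) := by
          rw [ofReal_rpow_mul hx, show (1 - A) * (r - 1) + (s - r) = γ by linarith [hexp]]
  -- main chain
  have hγm : Measurable fun x : ℝ => ENNReal.ofReal (x ^ γ) :=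
    ENNReal.measurable_ofReal.comp (measurable_rpow_const' _)
  calc ∫⁻ x in Set.Ioi (0:ℝ),
        ((∫⁻ τ in Set.Ioo (0:ℝ) x, f τ) / ENNReal.ofReal x) ^ r * ENNReal.ofReal (x ^ s)
      ≤ ∫⁻ x in Set.Ioi (0:ℝ),
          ENNReal.ofReal C1 * ((∫⁻ t in Set.Ioo (0:ℝ) x, G t) * ENNReal.ofReal (x ^ γ)) :=
        lintegral_mono_ae ((ae_restrict_iff' measurableSet_Ioi).2 (ae_of_all _ key))
    _ = ENNReal.ofReal C1 * ∫⁻ x in Set.Ioi (0:ℝ),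
          (∫⁻ t in Set.Ioo (0:ℝ) x, G t) * ENNReal.ofReal (x ^ γ) :=
        lintegral_const_mul' _ _ ENNReal.ofReal_ne_top
    _ = ENNReal.ofReal C1 * ∫⁻ t in Set.Ioi (0:ℝ),
          G t * ∫⁻ x in Set.Ioi t, ENNReal.ofReal (x ^ γ) := by
        rw [swap_lemma G _ hGm hγm]
    _ = ENNReal.ofReal C1 * ∫⁻ t in Set.Ioi (0:ℝ),
          ENNReal.ofReal (1 / (u - s)) * (f t ^ r * ENNReal.ofReal (t ^ s)) := by
        congr 1
        refine setLIntegral_congr_fun_ae measurableSet_Ioi (ae_of_all _ fun t ht => ?_)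
        rw [Set.mem_Ioi] at ht
        rw [lint_Ioi hγ ht, show -(γ + 1) = u - s by rw [hγdef]; ring,
          div_eq_mul_inv, ENNReal.ofReal_mul (Real.rpow_nonneg ht.le _), hG]
        simp only []
        rw [show f t ^ r * ENNReal.ofReal (t ^ u) *
              (ENNReal.ofReal (t ^ (γ + 1)) * ENNReal.ofReal (u - s)⁻¹)
            = ENNReal.ofReal (u - s)⁻¹ *
              (f t ^ r * (ENNReal.ofReal (t ^ u) * ENNReal.ofReal (t ^ (γ + 1)))) by ring,
          ofReal_rpow_mul ht, show u + (γ + 1) = s by rw [hγdef]; ring, one_div]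
    _ = ENNReal.ofReal (C1 * (1 / (u - s))) *
          ∫⁻ t in Set.Ioi (0:ℝ), f t ^ r * ENNReal.ofReal (t ^ s) := by
        rw [lintegral_const_mul' _ _ ENNReal.ofReal_ne_top, ← mul_assoc,
          ← ENNReal.ofReal_mul (by positivity)]
    _ ≤ ENNReal.ofReal ((r / (r - s - 1)) ^ r) *
          ∫⁻ x in Set.Ioi (0:ℝ), f x ^ r * ENNReal.ofReal (x ^ s) := by
        apply le_of_eq
        congr 1
        have hd : (0:ℝ) < (r - 1 - s) / r := div_pos (by linarith) hr0
        have h1Ad : 1 - A = (r - 1 - s) / r := by rw [hA]; field_simp; ring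
        have husd : u - s = (r - 1 - s) / r := by rw [hu]; field_simp; ring
        rw [hC1, h1Ad, husd, one_div, ← Real.rpow_neg_one ((r - 1 - s) / r),
          ← Real.rpow_add hd, show -(r - 1) + -1 = -r by ring,
          show r / (r - s - 1) = ((r - 1 - s) / r)⁻¹ by rw [inv_div]; ring_nf,
          Real.inv_rpow hd.le, ← Real.rpow_neg hd.le]

/-- Hardy's inequality on `(0,∞)` with power weight, in `[0,∞]`. -/
theorem stmt_7 (r s : ℝ) (hr : 1 ≤ r) (hs : s < r - 1)
    (f : ℝ → ENNReal) (hf : Measurable f) :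
    ∫⁻ x in Set.Ioi (0:ℝ),
        ((∫⁻ τ in Set.Ioo (0:ℝ) x, f τ) / ENNReal.ofReal x) ^ r * ENNReal.ofReal (x ^ s)
      ≤ ENNReal.ofReal ((r / (r - s - 1)) ^ r) *
          ∫⁻ x in Set.Ioi (0:ℝ), (f x) ^ r * ENNReal.ofReal (x ^ s) := by
  rcases eq_or_lt_of_le hr with heq | hr1
  · subst heq
    exact hardy_eq_one s (by linarith) f hf
  · exact hardy_gt r s hr1 hs f hf
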